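/- (Alternating residuals, skew-Hermitian case.) Let A be an n×n complex skew-Hermitian invertible matrix (Aᴴ = −A) with n ≥ 2, and take the restart parameter m = n−1. Let r₀, r₁, …, r_q ∈ ℂⁿ be a sequence of nonzero vectors such that for each k the vector r_k is a GMRES(n−1) residual of A from r_{k−1}. Then for every k = 1, …, q−1 one has r_{k+1} = α_k r_{k−1} with α_k = ‖r_{k+1}‖²/‖r_k‖², and 0 < α_k ≤ 1. -/

import Mathlib

open Polynomial Matrix

/-- The Euclidean (ℓ²) norm of a vector in ℂⁿ. -/
noncomputable def euclidNorm {n : ℕ} (v : Fin n → ℂ) : ℝ :=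
  ‖(WithLp.equiv 2 (Fin n → ℂ)).symm v‖

/-- `s` is a GMRES(m) residual of `A` from `r`: there is a polynomial `p` of degree at most `m`
with `p 0 = 1` such that `s = p(A) r` and `‖s‖ ≤ ‖q(A) r‖` for all admissible `q`. -/
def IsGMRESResidual {n : ℕ} (m : ℕ) (A : Matrix (Fin n) (Fin n) ℂ)
    (r s : Fin n → ℂ) : Prop :=
  ∃ p : ℂ[X], p.natDegree ≤ m ∧ p.eval 0 = 1 ∧ s = (aeval A p).mulVec r ∧
    ∀ q : ℂ[X], q.natDegree ≤ m → q.eval 0 = 1 →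
      euclidNorm s ≤ euclidNorm ((aeval A q).mulVec r)

/-- The Krylov matrix `K(A, r) = [r, Ar, …, Aᵐ r]`, an `n × (m+1)` matrix. -/
noncomputable def krylov {n : ℕ} (m : ℕ) (A : Matrix (Fin n) (Fin n) ℂ) (r : Fin n → ℂ) :
    Matrix (Fin n) (Fin (m + 1)) ℂ :=
  Matrix.of fun i j => (A ^ (j : ℕ)).mulVec r i

noncomputable def ee {n : ℕ} : (Fin n → ℂ) ≃ₗ[ℂ] EuclideanSpace ℂ (Fin n) :=
  (WithLp.linearEquiv 2 ℂ (Fin n → ℂ)).symm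

lemma inner_eq_zero_of_min {E : Type*} [NormedAddCommGroup E] [InnerProductSpace ℂ E]
    (s w : E) (h : ∀ t : ℂ, ‖s‖ ≤ ‖s + t • w‖) : (inner ℂ s w : ℂ) = 0 := by
  by_contra ha
  have hw : w ≠ 0 := by rintro rfl; simp at ha
  have hw2 : (0:ℝ) < ‖w‖^2 := pow_pos (norm_pos_iff.mpr hw) 2
  set a : ℂ := inner ℂ s w with hadef
  have habs : (0:ℝ) < ‖a‖ ^ 2 := pow_pos (norm_pos_iff.mpr ha) 2
  set t : ℂ := -(starRingEnd ℂ a) / ((‖w‖^2 : ℝ) : ℂ) with ht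
  have h2 : ‖s‖^2 ≤ ‖s + t • w‖^2 := pow_le_pow_left₀ (norm_nonneg _) (h t) 2
  rw [norm_add_sq (𝕜 := ℂ)] at h2
  have key : (starRingEnd ℂ) a * a = ((‖a‖ ^ 2 : ℝ) : ℂ) := by
    rw [Complex.sq_norm]
    exact (Complex.normSq_eq_conj_mul_self).symm
  have hin : (inner ℂ s (t • w) : ℂ) = ((-‖a‖^2 / ‖w‖^2 : ℝ) : ℂ) := by
    rw [inner_smul_right, ← hadef, ht, div_mul_eq_mul_div, neg_mul, key]
    push_cast
    ring
  have hre : RCLike.re (inner ℂ s (t • w) : ℂ) = -‖a‖^2 / ‖w‖^2 := by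
    rw [hin]; exact Complex.ofReal_re _
  have hnt : ‖t • w‖^2 = ‖a‖^2 / ‖w‖^2 := by
    rw [norm_smul, mul_pow, ht]
    rw [norm_div]
    simp only [norm_neg, Complex.norm_conj, Complex.norm_real, Real.norm_eq_abs]
    rw [abs_of_nonneg (le_of_lt hw2)]
    field_simp
  rw [hre, hnt] at h2
  have hc : (0:ℝ) < ‖a‖ ^ 2 / ‖w‖ ^ 2 := div_pos habs hw2
  rw [neg_div] at h2
  linarith

lemma euclidNorm_eq {n : ℕ} (v : Fin n → ℂ) : euclidNorm v = ‖ee v‖ := rfl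

lemma inner_ee {n : ℕ} (x y : Fin n → ℂ) :
    (inner ℂ (ee x) (ee y) : ℂ) = star x ⬝ᵥ y := by
  rw [EuclideanSpace.inner_eq_star_dotProduct, dotProduct_comm]; rfl

lemma sum_mulVec' {n : ℕ} {ι : Type*} (s : Finset ι) (f : ι → Matrix (Fin n) (Fin n) ℂ)
    (r : Fin n → ℂ) : (∑ i ∈ s, f i) *ᵥ r = ∑ i ∈ s, f i *ᵥ r := by
  induction s using Finset.cons_induction with
  | empty => simp [Matrix.zero_mulVec]
  | cons a s ha ih => simp [Finset.sum_cons, Matrix.add_mulVec, ih]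

lemma aeval_mulVec_eq_sum {n : ℕ} (hn : 1 ≤ n) (A : Matrix (Fin n) (Fin n) ℂ) (r : Fin n → ℂ)
    (g : ℂ[X]) (hg : g.natDegree ≤ n - 1) :
    (aeval A g) *ᵥ r = ∑ i ∈ Finset.range n, g.coeff i • (A ^ i) *ᵥ r := by
  have hlt : g.natDegree < n := by omega
  rw [Polynomial.aeval_eq_sum_range' hlt, sum_mulVec']
  exact Finset.sum_congr rfl fun i _ => smul_mulVec _ _ _

/-- From an annihilating polynomial, get one with constant term 1. -/
lemma exists_unit_annihilator {n : ℕ} (A : Matrix (Fin n) (Fin n) ℂ) (hA : IsUnit A)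
    (r : Fin n → ℂ) :
    ∀ d (g : ℂ[X]), g.natDegree ≤ d → g ≠ 0 → (aeval A g) *ᵥ r = 0 →
      ∃ p : ℂ[X], p.natDegree ≤ d ∧ p.eval 0 = 1 ∧ (aeval A p) *ᵥ r = 0 := by
  intro d
  induction d with
  | zero =>
    intro g hdeg hg h0
    have hgc : g = C (g.coeff 0) := eq_C_of_natDegree_le_zero hdeg
    have hc : g.coeff 0 ≠ 0 := by
      intro h; apply hg; rw [hgc, h, map_zero]
    have hr : r = 0 := by
      have : (aeval A g) *ᵥ r = g.coeff 0 • r := by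
        calc (aeval A g) *ᵥ r = (aeval A (C (g.coeff 0))) *ᵥ r := by rw [← hgc]
        _ = g.coeff 0 • r := by
            rw [aeval_C, Algebra.algebraMap_eq_smul_one, smul_mulVec, Matrix.one_mulVec]
      rw [this] at h0
      have := congrArg (fun v => (g.coeff 0)⁻¹ • v) h0
      simpa [smul_smul, inv_mul_cancel₀ hc] using this
    exact ⟨1, by simp, by simp, by simp [hr, Matrix.mulVec_zero]⟩
  | succ d ih =>
    intro g hdeg hg h0
    by_cases hc : g.coeff 0 = 0
    · have hgx : X * g.divX = g := by
        have := X_mul_divX_add g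
        rwa [hc, map_zero, add_zero] at this
      have hdx : g.divX ≠ 0 := by
        intro h; apply hg; rw [← hgx, h, mul_zero]
      have hdeg' : g.divX.natDegree ≤ d := by
        rw [natDegree_divX_eq_natDegree_tsub_one]; omega
      have h0' : (aeval A g.divX) *ᵥ r = 0 := by
        have hmul : A * (aeval A g.divX) = aeval A g := by
          conv_rhs => rw [← hgx]
          rw [_root_.map_mul, aeval_X]
        have hAg : A *ᵥ ((aeval A g.divX) *ᵥ r) = 0 := by
          rw [Matrix.mulVec_mulVec, hmul, h0]
        have hinj : Function.Injective A.mulVec := Matrix.mulVec_injective_iff_isUnit.mpr hA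
        apply hinj
        rw [hAg, Matrix.mulVec_zero]
      obtain ⟨p, hp1, hp2, hp3⟩ := ih g.divX hdeg' hdx h0'
      exact ⟨p, le_trans hp1 (Nat.le_succ d), hp2, hp3⟩
    · refine ⟨C (g.coeff 0)⁻¹ * g, le_trans (natDegree_C_mul_le _ _) hdeg, ?_, ?_⟩
      · simp [eval_mul, eval_C, ← Polynomial.coeff_zero_eq_eval_zero, inv_mul_cancel₀ hc]
      · rw [_root_.map_mul, aeval_C, Algebra.algebraMap_eq_smul_one, smul_mul_assoc, one_mul,
          smul_mulVec, h0, smul_zero]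

lemma gmres_orth {n : ℕ} (hn : 2 ≤ n) (A : Matrix (Fin n) (Fin n) ℂ) (r s : Fin n → ℂ)
    (h : IsGMRESResidual (n-1) A r s) {j : ℕ} (hj1 : 1 ≤ j) (hj2 : j ≤ n - 1) :
    (inner ℂ (ee s) (ee ((A ^ j) *ᵥ r)) : ℂ) = 0 := by
  obtain ⟨p, hdeg, heval, hs, hmin⟩ := h
  apply inner_eq_zero_of_min
  intro t
  have hq : (p + C t * X ^ j).natDegree ≤ n - 1 := by
    refine le_trans (natDegree_add_le _ _) (max_le hdeg ?_)
    exact le_trans (natDegree_C_mul_le _ _) (by rw [natDegree_X_pow]; exact hj2)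
  have hq0 : (p + C t * X ^ j).eval 0 = 1 := by
    simp [heval, zero_pow (by omega : j ≠ 0)]
  have hrepr : (aeval A (p + C t * X ^ j)) *ᵥ r = s + t • ((A ^ j) *ᵥ r) := by
    rw [map_add, Matrix.add_mulVec, ← hs]
    congr 1
    rw [← Polynomial.smul_eq_C_mul, _root_.map_smul, aeval_X_pow, smul_mulVec]
  have hle := hmin _ hq hq0
  rw [hrepr, euclidNorm_eq, euclidNorm_eq, map_add, _root_.map_smul] at hle
  exact hle

lemma inner_mulVec_left {n : ℕ} (M : Matrix (Fin n) (Fin n) ℂ) (x y : Fin n → ℂ) :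
    (inner ℂ (ee (M *ᵥ x)) (ee y) : ℂ) = inner ℂ (ee x) (ee (Mᴴ *ᵥ y)) := by
  rw [inner_ee, inner_ee, star_mulVec, ← Matrix.dotProduct_mulVec]

lemma krylov_li {n : ℕ} (hn : 2 ≤ n) {A : Matrix (Fin n) (Fin n) ℂ} (hA : IsUnit A)
    {r s : Fin n → ℂ} (hs : s ≠ 0) (h : IsGMRESResidual (n-1) A r s) :
    LinearIndependent ℂ (fun i : Fin (n-1) => ee ((A ^ ((i:ℕ)+1)) *ᵥ r)) := by
  rw [Fintype.linearIndependent_iff]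
  intro c hc
  by_contra hne
  push_neg at hne
  obtain ⟨i0, hi0⟩ := hne
  set g : ℂ[X] := ∑ i : Fin (n-1), monomial ((i:ℕ)+1) (c i) with hg
  have hgcoeff : ∀ i : Fin (n-1), g.coeff ((i:ℕ)+1) = c i := by
    intro i
    rw [hg, finset_sum_coeff]
    rw [Finset.sum_eq_single i]
    · simp [coeff_monomial]
    · intro b _ hb
      rw [coeff_monomial, if_neg]
      simp only [add_left_inj]
      exact fun hbe => hb (Fin.ext hbe)
    · simp
  have hgne : g ≠ 0 := fun h0 => hi0 (by rw [← hgcoeff i0, h0, coeff_zero])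
  have hgdeg : g.natDegree ≤ n - 1 := by
    apply natDegree_sum_le_of_forall_le
    intro i _
    have := i.isLt
    exact le_trans (natDegree_monomial_le _) (by omega)
  have hsum : ∑ i : Fin (n-1), c i • ((A ^ ((i:ℕ)+1)) *ᵥ r) = 0 := by
    have := congrArg ee.symm hc
    simpa [map_sum, _root_.map_smul] using this
  have hganv : (aeval A g) *ᵥ r = 0 := by
    rw [hg, map_sum, sum_mulVec', ← hsum]
    apply Finset.sum_congr rfl
    intro i _
    rw [aeval_monomial, ← Algebra.smul_def, smul_mulVec]
  obtain ⟨p, hp1, hp2, hp3⟩ := exists_unit_annihilator A hA r (n-1) g hgdeg hgne hganv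
  obtain ⟨p', _, _, _, hmin⟩ := h
  have hle := hmin p hp1 hp2
  rw [hp3] at hle
  apply hs
  have h0 : ‖ee s‖ ≤ 0 := by
    rw [← euclidNorm_eq]
    calc euclidNorm s ≤ euclidNorm (0 : Fin n → ℂ) := hle
    _ = 0 := by rw [euclidNorm_eq, map_zero, norm_zero]
  have : ee s = 0 := norm_le_zero_iff.mp h0
  have := congrArg ee.symm this
  simpa using this

lemma inner_right_span_zero {E : Type*} [NormedAddCommGroup E] [InnerProductSpace ℂ E]
    {ι : Type*} (z : E) (v : ι → E) (h : ∀ i, (inner ℂ z (v i) : ℂ) = 0) :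
    ∀ u ∈ Submodule.span ℂ (Set.range v), (inner ℂ z u : ℂ) = 0 := by
  intro u hu
  induction hu using Submodule.span_induction with
  | mem x hx => obtain ⟨i, rfl⟩ := hx; exact h i
  | zero => exact inner_zero_right z
  | add x y _ _ hx hy => rw [inner_add_right, hx, hy, add_zero]
  | smul a x _ hx => rw [inner_smul_right, hx, mul_zero]

lemma mem_orth_span {E : Type*} [NormedAddCommGroup E] [InnerProductSpace ℂ E]
    {ι : Type*} (z : E) (v : ι → E) (h : ∀ i, (inner ℂ z (v i) : ℂ) = 0) :
    z ∈ (Submodule.span ℂ (Set.range v))ᗮ := by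
  rw [Submodule.mem_orthogonal]
  intro u hu
  rw [inner_eq_zero_symm]
  exact inner_right_span_zero z v h u hu

lemma mem_span_krylov {n : ℕ} (hn : 2 ≤ n) (A : Matrix (Fin n) (Fin n) ℂ) (r : Fin n → ℂ)
    (g : ℂ[X]) (hdeg : g.natDegree ≤ n - 1) (h0 : g.eval 0 = 0) :
    ee ((aeval A g) *ᵥ r) ∈
      Submodule.span ℂ (Set.range fun i : Fin (n-1) => ee ((A ^ ((i:ℕ)+1)) *ᵥ r)) := by
  rw [aeval_mulVec_eq_sum (by omega) A r g hdeg, map_sum]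
  apply Submodule.sum_mem
  intro i hi
  rw [_root_.map_smul]
  rcases Nat.eq_zero_or_pos i with h | h
  · subst h
    rw [← coeff_zero_eq_eval_zero] at h0
    rw [h0, zero_smul]; exact Submodule.zero_mem _
  · apply Submodule.smul_mem
    apply Submodule.subset_span
    have hi' : i - 1 < n - 1 := by
      have := Finset.mem_range.mp hi; omega
    refine ⟨⟨i-1, hi'⟩, ?_⟩
    show ee ((A ^ (((⟨i-1, hi'⟩ : Fin (n-1)) : ℕ) + 1)) *ᵥ r) = _
    have hval : ((⟨i-1, hi'⟩ : Fin (n-1)) : ℕ) + 1 = i := by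
      simp only [Fin.val_mk]; omega
    rw [hval]

/-- Alternating residuals, skew-Hermitian case: for GMRES(n-1) applied to a skew-Hermitian invertible
matrix, `r_{k+1} = α_k r_{k-1}` with `α_k = ‖r_{k+1}‖²/‖r_k‖² ∈ (0, 1]`. -/
theorem gmres_alternating_residuals_skewHermitian {n : ℕ} (hn : 2 ≤ n) (q : ℕ)
    (A : Matrix (Fin n) (Fin n) ℂ) (hskew : Aᴴ = -A) (hA : IsUnit A)
    (r : ℕ → Fin n → ℂ) (hr : ∀ k ≤ q, r k ≠ 0)
    (hres : ∀ k < q, IsGMRESResidual (n - 1) A (r k) (r (k + 1))) :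
    ∀ k, 1 ≤ k → k < q →
      r (k + 1) = ((euclidNorm (r (k + 1)) ^ 2 / euclidNorm (r k) ^ 2 : ℝ) : ℂ) • r (k - 1) ∧
        0 < euclidNorm (r (k + 1)) ^ 2 / euclidNorm (r k) ^ 2 ∧
          euclidNorm (r (k + 1)) ^ 2 / euclidNorm (r k) ^ 2 ≤ 1 := by
  intro k hk1 hkq
  set x := r (k+1) with hxdef
  set mid := r k with hmiddef
  set y := r (k-1) with hydef
  have h1 : IsGMRESResidual (n-1) A mid x := hres k hkq
  have h2 : IsGMRESResidual (n-1) A y mid := by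
    have := hres (k-1) (by omega)
    rw [Nat.sub_add_cancel hk1] at this
    exact this
  have hx : x ≠ 0 := hr (k+1) (by omega)
  have hmid : mid ≠ 0 := hr k (by omega)
  have hy : y ≠ 0 := hr (k-1) (by omega)
  have hxe : ee x ≠ 0 := fun h => hx (by simpa using congrArg ee.symm h)
  have hmide : ee mid ≠ 0 := fun h => hmid (by simpa using congrArg ee.symm h)
  have hye : ee y ≠ 0 := fun h => hy (by simpa using congrArg ee.symm h)
  set v : Fin (n-1) → EuclideanSpace ℂ (Fin n) := fun i => ee ((A ^ ((i:ℕ)+1)) *ᵥ mid) with hv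
  set V := Submodule.span ℂ (Set.range v) with hV
  have li : LinearIndependent ℂ v := krylov_li hn hA hx h1
  have hdimV : Module.finrank ℂ V = n - 1 := by
    rw [hV, finrank_span_eq_card li, Fintype.card_fin]
  have hdimVo : Module.finrank ℂ Vᗮ = 1 := by
    have := Submodule.finrank_add_finrank_orthogonal (K := V)
    rw [hdimV, finrank_euclideanSpace_fin] at this
    omega
  have hxo : ee x ∈ Vᗮ := by
    apply mem_orth_span
    intro i
    exact gmres_orth hn A mid x h1 (by omega) (by have := i.isLt; omega)
  have hyo : ee y ∈ Vᗮ := by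
    apply mem_orth_span
    intro i
    have hAH : (A ^ ((i:ℕ)+1))ᴴ = ((-1:ℂ)^((i:ℕ)+1)) • A ^ ((i:ℕ)+1) := by
      rw [Matrix.conjTranspose_pow, hskew, ← neg_one_smul ℂ A, _root_.smul_pow]
    rw [inner_eq_zero_symm, inner_mulVec_left, hAH, smul_mulVec, _root_.map_smul,
      inner_smul_right,
      gmres_orth hn A y mid h2 (by omega) (by have := i.isLt; omega), mul_zero]
  have hspan : Submodule.span ℂ {ee y} = Vᗮ := by
    apply Submodule.eq_of_le_of_finrank_le
    · rw [Submodule.span_le, Set.singleton_subset_iff]; exact hyo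
    · rw [hdimVo, finrank_span_singleton hye]
  have hxmem : ee x ∈ Submodule.span ℂ {ee y} := hspan ▸ hxo
  obtain ⟨a, ha⟩ := Submodule.mem_span_singleton.mp hxmem
  obtain ⟨p1, hp1deg, hp1ev, hp1eq, hmin1⟩ := h1
  have hxsub : ee x - ee mid ∈ V := by
    have hd : (p1 - 1).natDegree ≤ n - 1 := by
      refine le_trans (natDegree_sub_le _ _) ?_; simp [hp1deg]
    have hev : (p1 - 1).eval 0 = 0 := by simp [hp1ev]
    have hmem := mem_span_krylov hn A mid (p1 - 1) hd hev
    have heq : (aeval A (p1 - 1)) *ᵥ mid = x - mid := by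
      rw [map_sub, Matrix.sub_mulVec, _root_.map_one, Matrix.one_mulVec, ← hp1eq]
    rw [heq, map_sub] at hmem
    exact hmem
  have hinner1 : (inner ℂ (ee x) (ee mid) : ℂ) = (‖ee x‖ : ℂ)^2 := by
    have h0 : (inner ℂ (ee x) (ee x - ee mid) : ℂ) = 0 := by
      rw [inner_eq_zero_symm]
      exact (Submodule.mem_orthogonal V (ee x)).mp hxo _ hxsub
    rw [inner_sub_right] at h0
    have h0' : (inner ℂ (ee x) (ee mid) : ℂ) = inner ℂ (ee x) (ee x) := by linear_combination -h0
    exact h0'.trans (inner_self_eq_norm_sq_to_K (ee x))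
  have h2c := h2
  obtain ⟨p2, hp2deg, hp2ev, hp2eq, hmin2⟩ := h2
  have hinner2 : (inner ℂ (ee mid) (ee y) : ℂ) = (‖ee mid‖ : ℂ)^2 := by
    have hd : (p2 - 1).natDegree ≤ n - 1 := by
      refine le_trans (natDegree_sub_le _ _) ?_; simp [hp2deg]
    have hev : (p2 - 1).eval 0 = 0 := by simp [hp2ev]
    have hmem := mem_span_krylov hn A y (p2 - 1) hd hev
    have heq : (aeval A (p2 - 1)) *ᵥ y = mid - y := by
      rw [map_sub, Matrix.sub_mulVec, _root_.map_one, Matrix.one_mulVec, ← hp2eq]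
    rw [heq, map_sub] at hmem
    have h0 : (inner ℂ (ee mid) (ee mid - ee y) : ℂ) = 0 := by
      refine inner_right_span_zero (ee mid) _ ?_ _ hmem
      intro i
      exact gmres_orth hn A y mid h2c (by omega) (by have := i.isLt; omega)
    rw [inner_sub_right] at h0
    have h0' : (inner ℂ (ee mid) (ee y) : ℂ) = inner ℂ (ee mid) (ee mid) := by linear_combination -h0
    exact h0'.trans (inner_self_eq_norm_sq_to_K (ee mid))
  have hkey : (starRingEnd ℂ) a * (‖ee mid‖:ℂ)^2 = (‖ee x‖:ℂ)^2 := by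
    have hc1 : (inner ℂ (ee x) (ee mid) : ℂ) = (starRingEnd ℂ) a * inner ℂ (ee y) (ee mid) := by
      rw [← ha, inner_smul_left]
    have hc2 : (inner ℂ (ee y) (ee mid) : ℂ) = (‖ee mid‖:ℂ)^2 := by
      rw [← inner_conj_symm, hinner2, map_pow, Complex.conj_ofReal]
    rw [hinner1, hc2] at hc1
    exact hc1.symm
  have hmidn : (‖ee mid‖:ℝ) ≠ 0 := norm_ne_zero_iff.mpr hmide
  have hm2 : ((‖ee mid‖^2 : ℝ):ℂ) ≠ 0 := Complex.ofReal_ne_zero.mpr (pow_ne_zero 2 hmidn)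
  have hkey' : (starRingEnd ℂ) a * ((‖ee mid‖^2:ℝ):ℂ) = ((‖ee x‖^2:ℝ):ℂ) := by
    push_cast; exact hkey
  have hca : (starRingEnd ℂ) a = ((‖ee x‖^2 / ‖ee mid‖^2 : ℝ):ℂ) := by
    rw [Complex.ofReal_div, eq_div_iff hm2]
    exact hkey'
  have haval : a = ((‖ee x‖^2 / ‖ee mid‖^2 : ℝ):ℂ) := by
    have := congrArg (starRingEnd ℂ) hca
    rwa [Complex.conj_conj, Complex.conj_ofReal] at this
  have hxpos : (0:ℝ) < ‖ee x‖^2 := pow_pos (norm_pos_iff.mpr hxe) 2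
  have hmpos : (0:ℝ) < ‖ee mid‖^2 := pow_pos (norm_pos_iff.mpr hmide) 2
  have hle : ‖ee x‖ ≤ ‖ee mid‖ := by
    have := hmin1 1 (by simp) (by simp)
    rw [_root_.map_one, Matrix.one_mulVec, euclidNorm_eq, euclidNorm_eq] at this
    exact this
  refine ⟨?_, ?_, ?_⟩
  · have hxy : ee x = ((euclidNorm x ^2 / euclidNorm mid ^2 : ℝ):ℂ) • ee y := by
      rw [← ha, haval, euclidNorm_eq, euclidNorm_eq]
    have := congrArg ee.symm hxy
    rw [_root_.map_smul] at this
    simpa using this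
  · rw [euclidNorm_eq, euclidNorm_eq]
    exact div_pos hxpos hmpos
  · rw [euclidNorm_eq, euclidNorm_eq]
    rw [div_le_one hmpos]
    exact pow_le_pow_left₀ (norm_nonneg _) hle 2
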